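/- Let n ≥ 4 and let q_1, …, q_n be pairwise distinct positive real numbers. Then there exist 3-element subsets T_1, …, T_{n−2} of {1, …, n} such that: (a) for each i ∈ {1, …, n−2}, the three numbers q_j (j ∈ T_i) do not form a geometric progression in any order; (b) there exist pairwise distinct indices j_3, …, j_{n−2} ∈ {1, …, n} such that for each k = 3, …, n−2 one has j_k ∈ T_k and j_k ∉ T_i for all i < k; (c) there exist indices x ∈ T_1 \ T_2 and y ∈ T_2 \ T_1. -/

import Mathlib

/-- Three positive reals `x, y, z` form a geometric progression in some order if
`x² = yz`, or `y² = xz`, or `z² = xy`.  A 3-element subset `T` avoids geometric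
progressions iff `q x ^ 2 ≠ q y * q z` for all pairwise distinct `x, y, z ∈ T`. -/
theorem choice_of_non_geometric_triples
    (n : ℕ) (hn : 4 ≤ n) (q : Fin n → ℝ)
    (hpos : ∀ i, 0 < q i) (hinj : Function.Injective q) :
    ∃ T : ℕ → Finset (Fin n),
      -- (a) each of T 1, …, T (n-2) is a 3-element set whose q-values do not form
      -- a geometric progression in any order
      (∀ i : ℕ, 1 ≤ i → i ≤ n - 2 → (T i).card = 3 ∧
        ∀ x ∈ T i, ∀ y ∈ T i, ∀ z ∈ T i,
          x ≠ y → x ≠ z → y ≠ z → q x ^ 2 ≠ q y * q z) ∧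
      -- (b) pairwise distinct indices j 3, …, j (n-2) with j k ∈ T k and j k ∉ T i for i < k
      (∃ j : ℕ → Fin n,
        (∀ k l : ℕ, 3 ≤ k → k ≤ n - 2 → 3 ≤ l → l ≤ n - 2 → k ≠ l → j k ≠ j l) ∧
        (∀ k : ℕ, 3 ≤ k → k ≤ n - 2 →
          j k ∈ T k ∧ ∀ i : ℕ, 1 ≤ i → i < k → j k ∉ T i)) ∧
      -- (c) elements x ∈ T 1 \ T 2 and y ∈ T 2 \ T 1
      (∃ x, x ∈ T 1 ∧ x ∉ T 2) ∧ (∃ y, y ∈ T 2 ∧ y ∉ T 1) := by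
  classical
  have hne : (Finset.univ : Finset (Fin n)).Nonempty := ⟨⟨0, by omega⟩, Finset.mem_univ _⟩
  obtain ⟨a, -, hamax⟩ := Finset.exists_max_image Finset.univ q hne
  obtain ⟨b, -, hbmin⟩ := Finset.exists_min_image Finset.univ q hne
  have hqa : ∀ x, x ≠ a → q x < q a := fun x hx =>
    lt_of_le_of_ne (hamax x (Finset.mem_univ x)) (fun h => hx (hinj h))
  have hqb : ∀ x, x ≠ b → q b < q x := fun x hx =>
    lt_of_le_of_ne (hbmin x (Finset.mem_univ x)) (fun h => hx (hinj h.symm))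
  have hab : a ≠ b := by
    intro h
    have h0 : (⟨0, by omega⟩ : Fin n) ≠ ⟨1, by omega⟩ := by simp [Fin.ext_iff]
    have e : ∀ x : Fin n, q x = q a := fun x =>
      le_antisymm (hamax x (Finset.mem_univ x)) (h ▸ hbmin x (Finset.mem_univ x))
    exact h0 (hinj ((e _).trans (e _).symm))
  have hba : q b < q a := hqb a hab
  -- key non-GP lemma for a triple with values q lo < q mid < q hi and q mid ^ 2 ≠ q hi * q lo
  have key : ∀ hi lo mid : Fin n, q lo < q mid → q mid < q hi →
      q mid ^ 2 ≠ q hi * q lo →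
      ∀ T : Finset (Fin n), (∀ x ∈ T, x = hi ∨ x = lo ∨ x = mid) →
      ∀ x ∈ T, ∀ y ∈ T, ∀ z ∈ T, x ≠ y → x ≠ z → y ≠ z → q x ^ 2 ≠ q y * q z := by
    intro hi lo mid h1 h2 h3 T hT x hx y hy z hz hxy hxz hyz
    have plo := hpos lo; have pmid := hpos mid; have phi := hpos hi
    rcases hT x hx with rfl|rfl|rfl <;> rcases hT y hy with rfl|rfl|rfl <;>
      rcases hT z hz with rfl|rfl|rfl <;>
      first
        | exact absurd rfl hxy
        | exact absurd rfl hxz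
        | exact absurd rfl hyz
        | exact h3
        | exact fun h => h3 (h.trans (mul_comm _ _))
        | (intro h; nlinarith)
  -- the main construction, given a suitable list L and a special last triple Tsp
  have main : ∀ L : List (Fin n), L.length = n - 2 → L.Nodup →
      (∀ x ∈ L, x ≠ a ∧ x ≠ b) →
      (∀ k : ℕ, k + 1 < n - 2 → q (L.getD k a) ^ 2 ≠ q a * q b) →
      ∀ Tsp : Finset (Fin n), Tsp.card = 3 → L.getD (n - 3) a ∈ Tsp →
      (∀ x ∈ Tsp, ∀ y ∈ Tsp, ∀ z ∈ Tsp, x ≠ y → x ≠ z → y ≠ z → q x ^ 2 ≠ q y * q z) →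
      (∃ T : ℕ → Finset (Fin n),
      (∀ i : ℕ, 1 ≤ i → i ≤ n - 2 → (T i).card = 3 ∧
        ∀ x ∈ T i, ∀ y ∈ T i, ∀ z ∈ T i,
          x ≠ y → x ≠ z → y ≠ z → q x ^ 2 ≠ q y * q z) ∧
      (∃ j : ℕ → Fin n,
        (∀ k l : ℕ, 3 ≤ k → k ≤ n - 2 → 3 ≤ l → l ≤ n - 2 → k ≠ l → j k ≠ j l) ∧
        (∀ k : ℕ, 3 ≤ k → k ≤ n - 2 →
          j k ∈ T k ∧ ∀ i : ℕ, 1 ≤ i → i < k → j k ∉ T i)) ∧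
      (∃ x, x ∈ T 1 ∧ x ∉ T 2) ∧ (∃ y, y ∈ T 2 ∧ y ∉ T 1)) := by
    intro L hlen hnd hmemL hgood Tsp hTc hTs0 hTgp
    set s : ℕ → Fin n := fun i => L.getD (i - 1) a with hs
    have hsget : ∀ i : ℕ, 1 ≤ i → i ≤ n - 2 → ∃ h : i - 1 < L.length, s i = L[i - 1] := by
      intro i h1 h2
      have h : i - 1 < L.length := by omega
      exact ⟨h, List.getD_eq_getElem L a h⟩
    have hmem' : ∀ i : ℕ, 1 ≤ i → i ≤ n - 2 → s i ≠ a ∧ s i ≠ b := by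
      intro i h1 h2
      obtain ⟨h, he⟩ := hsget i h1 h2
      exact hmemL _ (he ▸ List.getElem_mem h)
    have hinjL : ∀ i k : ℕ, 1 ≤ i → i ≤ n - 2 → 1 ≤ k → k ≤ n - 2 → i ≠ k → s i ≠ s k := by
      intro i k h1 h2 h3 h4 hik
      obtain ⟨hi', hei⟩ := hsget i h1 h2
      obtain ⟨hk', hek⟩ := hsget k h3 h4
      rw [hei, hek]
      intro h
      have := (List.Nodup.getElem_inj_iff hnd).mp h
      omega
    have hslast : s (n - 2) ∈ Tsp := by
      have : n - 2 - 1 = n - 3 := by omega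
      show L.getD (n - 2 - 1) a ∈ Tsp
      rw [this]; exact hTs0
    refine ⟨fun i => if i = n - 2 then Tsp else {a, b, s i}, ?_, ?_, ?_, ?_⟩
    · -- (a)
      intro i h1 h2
      by_cases hi : i = n - 2
      · simp only [hi, if_pos rfl]
        exact ⟨hTc, hTgp⟩
      · simp only [if_neg hi]
        obtain ⟨hia, hib⟩ := hmem' i h1 h2
        refine ⟨Finset.card_eq_three.2 ⟨a, b, s i, hab, Ne.symm hia, Ne.symm hib, rfl⟩, ?_⟩
        exact key a b (s i) (hqb _ hib) (hqa _ hia) (hgood (i - 1) (by omega)) _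
          (by intro x hx; simpa using hx)
    · -- (b)
      refine ⟨s, ?_, ?_⟩
      · intro k l hk1 hk2 hl1 hl2 hkl
        exact hinjL k l (by omega) hk2 (by omega) hl2 hkl
      · intro k hk1 hk2
        constructor
        · by_cases hk : k = n - 2
          · simp only [hk, if_pos rfl]
            exact hslast
          · simp only [if_neg hk]
            exact Finset.mem_insert_of_mem (Finset.mem_insert_of_mem (Finset.mem_singleton_self _))
        · intro i hi1 hi2
          have hik : i ≠ n - 2 := by omega
          simp only [if_neg hik, Finset.mem_insert, Finset.mem_singleton]
          obtain ⟨hka, hkb⟩ := hmem' k (by omega) hk2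
          push_neg
          exact ⟨hka, hkb, hinjL k i (by omega) hk2 (by omega) (by omega) (by omega)⟩
    · -- (c) : x ∈ T 1 \ T 2
      have h1ne : (1 : ℕ) ≠ n - 2 := by omega
      have h2mem : s 2 ∈ (if 2 = n - 2 then Tsp else {a, b, s 2}) := by
        by_cases h2 : 2 = n - 2
        · simp only [if_pos h2]
          rw [h2]; exact hslast
        · simp only [if_neg h2]
          exact Finset.mem_insert_of_mem (Finset.mem_insert_of_mem (Finset.mem_singleton_self _))
      have h2notin1 : s 2 ∉ (if 1 = n - 2 then Tsp else {a, b, s 1}) := by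
        simp only [if_neg h1ne, Finset.mem_insert, Finset.mem_singleton]
        obtain ⟨h2a, h2b⟩ := hmem' 2 (by omega) (by omega)
        push_neg
        exact ⟨h2a, h2b, hinjL 2 1 (by omega) (by omega) (by omega) (by omega) (by omega)⟩
      have hc1 : (if 1 = n - 2 then Tsp else ({a, b, s 1} : Finset (Fin n))).card = 3 := by
        simp only [if_neg h1ne]
        obtain ⟨h1a, h1b⟩ := hmem' 1 (by omega) (by omega)
        exact Finset.card_eq_three.2 ⟨a, b, s 1, hab, Ne.symm h1a, Ne.symm h1b, rfl⟩
      have hc2 : (if 2 = n - 2 then Tsp else ({a, b, s 2} : Finset (Fin n))).card = 3 := by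
        by_cases h2 : 2 = n - 2
        · simp only [if_pos h2]; exact hTc
        · simp only [if_neg h2]
          obtain ⟨h2a, h2b⟩ := hmem' 2 (by omega) (by omega)
          exact Finset.card_eq_three.2 ⟨a, b, s 2, hab, Ne.symm h2a, Ne.symm h2b, rfl⟩
      have hns : ¬ (if 1 = n - 2 then Tsp else ({a, b, s 1} : Finset (Fin n)))
          ⊆ (if 2 = n - 2 then Tsp else ({a, b, s 2} : Finset (Fin n))) := by
        intro hsub
        have := Finset.eq_of_subset_of_card_le hsub (by omega)
        rw [this] at h2notin1
        exact h2notin1 h2mem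
      obtain ⟨x, hx1, hx2⟩ := Finset.not_subset.1 hns
      exact ⟨x, hx1, hx2⟩
    · -- (c) : y ∈ T 2 \ T 1
      have h1ne : (1 : ℕ) ≠ n - 2 := by omega
      refine ⟨s 2, ?_, ?_⟩
      · by_cases h2 : 2 = n - 2
        · simp only [if_pos h2]
          rw [h2]; exact hslast
        · simp only [if_neg h2]
          exact Finset.mem_insert_of_mem (Finset.mem_insert_of_mem (Finset.mem_singleton_self _))
      · simp only [if_neg h1ne, Finset.mem_insert, Finset.mem_singleton]
        obtain ⟨h2a, h2b⟩ := hmem' 2 (by omega) (by omega)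
        push_neg
        exact ⟨h2a, h2b, hinjL 2 1 (by omega) (by omega) (by omega) (by omega) (by omega)⟩
  -- now build L and Tsp, by cases on whether some s₀ has q s₀ ^ 2 = q a * q b
  set R : Finset (Fin n) := (Finset.univ.erase a).erase b with hR
  have hmemR : ∀ x, x ∈ R ↔ x ≠ a ∧ x ≠ b := by
    intro x
    simp [hR, Finset.mem_erase, and_comm]
  have hRcard : R.card = n - 2 := by
    rw [hR, Finset.card_erase_of_mem, Finset.card_erase_of_mem (Finset.mem_univ a)]
    · simp [Fintype.card_fin]; omega
    · exact Finset.mem_erase.2 ⟨Ne.symm hab, Finset.mem_univ b⟩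
  by_cases hsp : ∃ s0 ∈ R, q s0 ^ 2 = q a * q b
  · -- special case
    obtain ⟨s0, hs0R, hs0⟩ := hsp
    obtain ⟨hs0a, hs0b⟩ := (hmemR s0).1 hs0R
    set R' : Finset (Fin n) := R.erase s0 with hR'
    have hR'card : R'.card = n - 3 := by
      rw [hR', Finset.card_erase_of_mem hs0R, hRcard]; omega
    set L : List (Fin n) := R'.toList ++ [s0] with hL
    have hlen : L.length = n - 2 := by
      simp [hL, Finset.length_toList, hR'card]
      omega
    have hlen' : R'.toList.length = n - 3 := by simp [Finset.length_toList, hR'card]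
    have hnd : L.Nodup := by
      rw [hL, List.nodup_append]
      refine ⟨R'.nodup_toList, List.nodup_singleton _, ?_⟩
      intro x hx
      simp only [List.mem_singleton]
      intro y hy h
      rw [h, hy] at hx
      exact (Finset.mem_erase.1 (Finset.mem_toList.1 hx)).1 rfl
    have hmemL : ∀ x ∈ L, x ≠ a ∧ x ≠ b := by
      intro x hx
      rcases List.mem_append.1 hx with h | h
      · exact (hmemR x).1 (Finset.mem_of_mem_erase (Finset.mem_toList.1 h))
      · rw [List.mem_singleton.1 h]; exact ⟨hs0a, hs0b⟩
    have hgood : ∀ k : ℕ, k + 1 < n - 2 → q (L.getD k a) ^ 2 ≠ q a * q b := by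
      intro k hk
      have hk' : k < R'.toList.length := by omega
      have he : L.getD k a = R'.toList[k] := by
        rw [List.getD_eq_getElem L a (by omega : k < L.length)]
        exact List.getElem_append_left hk'
      have hmem : L.getD k a ∈ R' := by
        rw [he]; exact Finset.mem_toList.1 (List.getElem_mem hk')
      have hne0 : L.getD k a ≠ s0 := (Finset.mem_erase.1 hmem).1
      have hne0' : q (L.getD k a) ≠ q s0 := fun h => hne0 (hinj h)
      intro h
      rw [← hs0] at h
      rcases lt_or_gt_of_ne hne0' with hlt | hlt
      · nlinarith [hpos (L.getD k a), hpos s0]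
      · nlinarith [hpos (L.getD k a), hpos s0]
    have hlast : L.getD (n - 3) a = s0 := by
      rw [List.getD_eq_getElem L a (by omega : n - 3 < L.length)]
      rw [List.getElem_append_right (by omega)]
      simp [hlen']
    -- t := first element of L
    have hR'ne : R'.toList ≠ [] := by
      intro h
      have := hlen'
      rw [h] at this
      simp at this
      omega
    have h0lt : 0 < R'.toList.length := List.length_pos_iff.2 hR'ne
    set t : Fin n := R'.toList[0] with ht
    have htR' : t ∈ R' := Finset.mem_toList.1 (List.getElem_mem h0lt)
    have hts0 : t ≠ s0 := (Finset.mem_erase.1 htR').1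
    obtain ⟨hta, htb⟩ := (hmemR t).1 (Finset.mem_of_mem_erase htR')
    have hqts0 : q t ≠ q s0 := fun h => hts0 (hinj h)
    have hs0lta : q s0 < q a := hqa s0 hs0a
    have hblts0 : q b < q s0 := hqb s0 hs0b
    rcases lt_or_gt_of_ne hqts0 with hlt | hlt
    · -- Tsp = {a, s0, t} : q t < q s0 < q a, mid = s0
      have hgp : q s0 ^ 2 ≠ q a * q t := by
        rw [hs0]
        intro h
        exact htb (hinj (mul_left_cancel₀ (ne_of_gt (hpos a)) h.symm))
      refine main L hlen hnd hmemL hgood {a, s0, t}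
        (Finset.card_eq_three.2 ⟨a, s0, t, Ne.symm hs0a, Ne.symm hta, Ne.symm hts0, rfl⟩)
        (by rw [hlast]; simp) ?_
      exact key a t s0 hlt hs0lta hgp _ (by intro x hx; simp at hx; tauto)
    · -- Tsp = {b, s0, t} : q b < q s0 < q t, mid = s0
      have hgp : q s0 ^ 2 ≠ q t * q b := by
        rw [hs0]
        intro h
        exact hta (hinj (mul_right_cancel₀ (ne_of_gt (hpos b)) h.symm))
      refine main L hlen hnd hmemL hgood {b, s0, t}
        (Finset.card_eq_three.2 ⟨b, s0, t, Ne.symm hs0b, Ne.symm htb, Ne.symm hts0, rfl⟩)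
        (by rw [hlast]; simp) ?_
      exact key t b s0 hblts0 hlt hgp _ (by intro x hx; simp at hx; tauto)
  · -- generic case : no bad s₀ at all
    push_neg at hsp
    set L : List (Fin n) := R.toList with hL
    have hlen : L.length = n - 2 := by simp [hL, Finset.length_toList, hRcard]
    have hmemL : ∀ x ∈ L, x ≠ a ∧ x ≠ b := fun x hx => (hmemR x).1 (Finset.mem_toList.1 hx)
    have hgoodall : ∀ k : ℕ, k < n - 2 → q (L.getD k a) ^ 2 ≠ q a * q b := by
      intro k hk
      have hk' : k < L.length := by omega
      have hmem : L.getD k a ∈ R := by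
        rw [List.getD_eq_getElem L a hk']
        exact Finset.mem_toList.1 (List.getElem_mem hk')
      exact hsp _ hmem
    have hlastmem : L.getD (n - 3) a ∈ R := by
      have hk' : n - 3 < L.length := by omega
      rw [List.getD_eq_getElem L a hk']
      exact Finset.mem_toList.1 (List.getElem_mem hk')
    obtain ⟨hla, hlb⟩ := (hmemR _).1 hlastmem
    refine main L hlen R.nodup_toList hmemL (fun k hk => hgoodall k (by omega))
      {a, b, L.getD (n - 3) a}
      (Finset.card_eq_three.2 ⟨a, b, _, hab, Ne.symm hla, Ne.symm hlb, rfl⟩)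
      (by simp) ?_
    exact key a b _ (hqb _ hlb) (hqa _ hla) (hgoodall (n - 3) (by omega)) _
      (by intro x hx; simpa using hx)
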